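/- Let i ≥ 2 and suppose d_i = 0, where d_i = dim_F(C_i ∩ L_1). Then for every nonzero l ∈ L_i, the F-subspace span_F{⁅l, a⁆ : a ∈ L_1} of M_{i+1} has dimension 2 over F. -/

import Mathlib

open Submodule

/-- The `i`-th two-step centraliser `C_i = {a ∈ M_1 | ⁅a, u⁆ = 0 for all u ∈ M_i}`. -/
def twoStepCentraliser {E : Type*} [Field E] {M : Type*} [LieRing M] [LieAlgebra E M]
    (Mc : ℕ → Submodule E M) (i : ℕ) : Submodule E M where
  carrier := {a : M | a ∈ Mc 1 ∧ ∀ u ∈ Mc i, ⁅a, u⁆ = 0}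
  add_mem' := by
    rintro a b ⟨ha1, ha2⟩ ⟨hb1, hb2⟩
    exact ⟨add_mem ha1 hb1, fun u hu => by rw [add_lie, ha2 u hu, hb2 u hu, add_zero]⟩
  zero_mem' := ⟨zero_mem _, fun u _ => zero_lie u⟩
  smul_mem' := by
    rintro c a ⟨ha1, ha2⟩
    exact ⟨Submodule.smul_mem _ c ha1, fun u hu => by rw [smul_lie, ha2 u hu, smul_zero]⟩

/-- `Mc` is a grading of `M` as a graded Lie algebra of maximal class over `E`,
generated in degree 1. -/
structure IsMaximalClass (E : Type*) [Field E] (M : Type*) [LieRing M] [LieAlgebra E M]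
    (Mc : ℕ → Submodule E M) : Prop where
  zero_bot : Mc 0 = ⊥
  internal : DirectSum.IsInternal Mc
  lie_mem : ∀ i j : ℕ, ∀ x ∈ Mc i, ∀ y ∈ Mc j, ⁅x, y⁆ ∈ Mc (i + j)
  finrank_one : Module.finrank E ↥(Mc 1) = 2
  finrank_eq_one : ∀ i : ℕ, 2 ≤ i → Module.finrank E ↥(Mc i) = 1
  span_succ : ∀ i : ℕ, 1 ≤ i →
    Mc (i + 1) = Submodule.span E {z : M | ∃ v ∈ Mc i, ∃ a ∈ Mc 1, z = ⁅v, a⁆}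

/-- The homogeneous components of the Lie `F`-subalgebra generated by `X` and `Y` in
degree 1:  `L_1 = span_F {X, Y}` and `L_{i+1} = span_F {⁅v, a⁆ : v ∈ L_i, a ∈ L_1}`. -/
def Lcomp (F : Type*) [Field F] {M : Type*} [LieRing M] [Module F M]
    (X Y : M) : ℕ → Submodule F M
  | 0 => ⊥
  | 1 => Submodule.span F {X, Y}
  | (i + 2) => Submodule.span F
      {z : M | ∃ v ∈ Lcomp F X Y (i + 1), ∃ a ∈ Submodule.span F ({X, Y} : Set M), z = ⁅v, a⁆}

/-- `d_i = dim_F (C_i ∩ L_1)`. -/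
noncomputable def dSeq (E : Type*) [Field E] {M : Type*} [LieRing M] [LieAlgebra E M]
    (Mc : ℕ → Submodule E M) (F : Type*) [Field F] [Algebra F E] [LieAlgebra F M]
    [IsScalarTower F E M] (X Y : M) (i : ℕ) : ℕ :=
  Module.finrank F
    ↥(Submodule.restrictScalars F (twoStepCentraliser Mc i) ⊓ Lcomp F X Y 1)


lemma Lcomp_le_Mc {E : Type*} [Field E] {M : Type*} [LieRing M] [LieAlgebra E M]
    {Mc : ℕ → Submodule E M} (hM : IsMaximalClass E M Mc)
    (F : Type*) [Field F] [Algebra F E] [LieAlgebra F M] [IsScalarTower F E M]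
    {X Y : M} (hX : X ∈ Mc 1) (hY : Y ∈ Mc 1) :
    ∀ i, ∀ x ∈ Lcomp F X Y i, x ∈ Mc i := by
  have h1 : ∀ x ∈ Lcomp F X Y 1, x ∈ Mc 1 := by
    intro x hx
    have : Submodule.span F ({X, Y} : Set M) ≤ Submodule.restrictScalars F (Mc 1) := by
      rw [Submodule.span_le]
      rintro z (rfl | rfl) <;> simpa using ‹_›
    exact this hx
  intro i
  induction i with
  | zero => intro x hx; simp only [Lcomp, Submodule.mem_bot] at hx; subst hx; exact zero_mem _
  | succ n ih =>
    match n, ih with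
    | 0, _ => exact h1
    | (m+1), ih =>
      intro x hx
      have : Submodule.span F
          {z : M | ∃ v ∈ Lcomp F X Y (m + 1), ∃ a ∈ Submodule.span F ({X, Y} : Set M), z = ⁅v, a⁆}
          ≤ Submodule.restrictScalars F (Mc (m + 2)) := by
        rw [Submodule.span_le]
        rintro z ⟨v, hv, a, ha, rfl⟩
        have hv' : v ∈ Mc (m + 1) := ih v hv
        have ha' : a ∈ Mc 1 := h1 a ha
        exact hM.lie_mem (m + 1) 1 v hv' a ha'
      exact this hx

/-- if `i ≥ 2` and `d_i = 0`, then `dim_F ⁅l, L_1⁆ = 2` for every nonzero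
`l ∈ L_i`. -/
theorem stmt_5 (E : Type*) [Field E] (M : Type*) [LieRing M] [LieAlgebra E M]
    (Mc : ℕ → Submodule E M) (hM : IsMaximalClass E M Mc)
    (F : Type*) [Field F] [Algebra F E] [LieAlgebra F M] [IsScalarTower F E M]
    (X Y : M) (hX : X ∈ Mc 1) (hY : Y ∈ Mc 1) (hXY : LinearIndependent E ![X, Y])
    (i : ℕ) (hi : 2 ≤ i) (hd : dSeq E Mc F X Y i = 0) :
    ∀ l ∈ Lcomp F X Y i, l ≠ 0 →
      Module.finrank F
        ↥(Submodule.span F {z : M | ∃ a ∈ Lcomp F X Y 1, z = ⁅l, a⁆}) = 2  := by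
  intro l hl hlne
  -- l ∈ Mc i
  have hlM : l ∈ Mc i := Lcomp_le_Mc hM F hX hY i l hl
  -- X, Y linearly independent over F
  have hXYF : LinearIndependent F ![X, Y] :=
    hXY.restrict_scalars' F
  -- every element of Mc i is an E-multiple of l
  have hmul : ∀ u ∈ Mc i, ∃ c : E, c • l = u := by
    have hrank : Module.finrank E ↥(Mc i) = 1 := hM.finrank_eq_one i hi
    have hlv : (⟨l, hlM⟩ : ↥(Mc i)) ≠ 0 := by
      simp only [ne_eq, Submodule.mk_eq_zero]; exact hlne
    intro u hu
    obtain ⟨c, hc⟩ := (finrank_eq_one_iff_of_nonzero' (⟨l, hlM⟩ : ↥(Mc i)) hlv).mp hrank ⟨u, hu⟩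
    exact ⟨c, congrArg Subtype.val hc⟩
  -- the centraliser intersection is trivial
  have hbot : Submodule.restrictScalars F (twoStepCentraliser Mc i) ⊓ Lcomp F X Y 1 = ⊥ := by
    have hle : Submodule.restrictScalars F (twoStepCentraliser Mc i) ⊓ Lcomp F X Y 1 ≤
        Lcomp F X Y 1 := inf_le_right
    haveI : FiniteDimensional F ↥(Lcomp F X Y 1) := by
      show FiniteDimensional F ↥(Submodule.span F ({X, Y} : Set M))
      exact FiniteDimensional.span_of_finite F (Set.toFinite _)
    haveI := Submodule.finiteDimensional_of_le hle
    exact Submodule.finrank_eq_zero.mp hd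
  -- ⁅l, X⁆ and ⁅l, Y⁆ are F-linearly independent
  have hind : LinearIndependent F ![⁅l, X⁆, ⁅l, Y⁆] := by
    rw [LinearIndependent.pair_iff]
    intro s t hst
    set a := s • X + t • Y with ha
    have hbr : ⁅l, a⁆ = 0 := by
      rw [ha, lie_add, lie_smul, lie_smul]; exact hst
    have haL : a ∈ Lcomp F X Y 1 := by
      apply add_mem <;> exact Submodule.smul_mem _ _ (Submodule.subset_span (by simp))
    have haC : a ∈ twoStepCentraliser Mc i := by
      refine ⟨Lcomp_le_Mc hM F hX hY 1 a haL, fun u hu => ?_⟩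
      obtain ⟨c, rfl⟩ := hmul u hu
      rw [lie_smul, ← lie_skew, hbr, neg_zero, smul_zero]
    have : a ∈ (⊥ : Submodule F M) := by
      rw [← hbot]; exact ⟨haC, haL⟩
    rw [Submodule.mem_bot] at this
    exact LinearIndependent.pair_iff.mp hXYF s t (by rw [← ha]; exact this)
  -- the span in question equals span of the two brackets
  have hspan : Submodule.span F {z : M | ∃ a ∈ Lcomp F X Y 1, z = ⁅l, a⁆} =
      Submodule.span F ({⁅l, X⁆, ⁅l, Y⁆} : Set M) := by
    apply le_antisymm
    · rw [Submodule.span_le]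
      rintro z ⟨a, ha, rfl⟩
      induction ha using Submodule.span_induction with
      | mem x hx =>
        rcases hx with rfl | rfl
        · exact Submodule.subset_span (by simp)
        · exact Submodule.subset_span (by simp)
      | zero => rw [lie_zero]; exact zero_mem _
      | add x y _ _ hx hy => rw [lie_add]; exact add_mem hx hy
      | smul c x _ hx => rw [lie_smul]; exact Submodule.smul_mem _ _ hx
    · rw [Submodule.span_le]
      rintro z (rfl | rfl)
      · exact Submodule.subset_span ⟨X, Submodule.subset_span (by simp), rfl⟩
      · exact Submodule.subset_span ⟨Y, Submodule.subset_span (by simp), rfl⟩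
  rw [hspan]
  have hr : Set.range ![⁅l, X⁆, ⁅l, Y⁆] = ({⁅l, X⁆, ⁅l, Y⁆} : Set M) := by
    ext z; simp [Fin.exists_fin_two, or_comm]
  have := finrank_span_eq_card hind
  rw [hr] at this
  simpa using this
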